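/- Let q ∈ (0,1) and f : I → ℝ be continuous at 0, where I is a real interval containing 0. Define F(x) = (1−q²)·x·∑_{n=0}^{∞} q^{2n}·f(q^{2n+1}x). Then for every x ∈ qI, the q-symmetric derivative of F at x equals f(x): if x ≠ 0, (F(qx) − F(q⁻¹x))/((q−q⁻¹)x) = f(x), and F'(0) = f(0). -/

import Mathlib

/-- `F(x) = (1−q²)·x·∑_{n=0}^{∞} q^{2n}·f(q^{2n+1}x)`, the `q`-symmetric integral of `f`
from `0` to `x`. -/
noncomputable def qsymF (q : ℝ) (f : ℝ → ℝ) (x : ℝ) : ℝ :=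
  (1 - q ^ 2) * x * ∑' n : ℕ, q ^ (2 * n) * f (q ^ (2 * n + 1) * x)

open Filter Topology

private lemma qsym_summable (q : ℝ) (hq : q ∈ Set.Ioo (0:ℝ) 1) (f : ℝ → ℝ)
    (hf : ContinuousAt f 0) (c : ℝ) :
    Summable (fun n : ℕ => q ^ (2 * n) * f (q ^ (2 * n) * c)) := by
  obtain ⟨hq0, hq1⟩ := hq
  have hq2 : q ^ 2 < 1 := by nlinarith
  have hq2' : (0:ℝ) ≤ q ^ 2 := sq_nonneg q
  have htend : Filter.Tendsto (fun n : ℕ => q ^ (2 * n) * c) atTop (nhds 0) := by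
    have h := (tendsto_pow_atTop_nhds_zero_of_lt_one hq2' hq2).mul_const c
    simpa [pow_mul] using h
  have hft : Filter.Tendsto (fun n : ℕ => |f (q ^ (2 * n) * c)|) atTop (nhds |f 0|) :=
    ((hf.tendsto.comp htend)).abs
  obtain ⟨C, hC⟩ := hft.bddAbove_range
  have hCb : ∀ n : ℕ, |f (q ^ (2 * n) * c)| ≤ C := fun n =>
    hC (Set.mem_range_self n)
  apply Summable.of_norm_bounded (g := fun n : ℕ => C * (q ^ 2) ^ n)
    ((summable_geometric_of_lt_one hq2' hq2).mul_left C)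
  intro n
  have : ‖q ^ (2 * n) * f (q ^ (2 * n) * c)‖ = (q ^ 2) ^ n * |f (q ^ (2 * n) * c)| := by
    rw [norm_mul, pow_mul]
    simp [abs_of_nonneg (pow_nonneg (sq_nonneg q) n)]
  rw [this]
  have h1 : (0:ℝ) ≤ (q ^ 2) ^ n := pow_nonneg (sq_nonneg q) n
  calc (q ^ 2) ^ n * |f (q ^ (2 * n) * c)| ≤ (q ^ 2) ^ n * C :=
        mul_le_mul_of_nonneg_left (hCb n) h1
    _ = C * (q ^ 2) ^ n := mul_comm _ _

theorem stmt6 (q : ℝ) (hq : q ∈ Set.Ioo (0:ℝ) 1)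
    (I : Set ℝ) (hI : I.OrdConnected) (h0 : (0:ℝ) ∈ I)
    (f : ℝ → ℝ) (hf : ContinuousAt f 0) :
    (∀ x ∈ (fun t => q * t) '' I, x ≠ 0 →
      (qsymF q f (q * x) - qsymF q f (q⁻¹ * x)) / ((q - q⁻¹) * x) = f x) ∧
    HasDerivAt (qsymF q f) (f 0) 0 := by
  obtain ⟨hq0, hq1⟩ := hq
  have hqne : q ≠ 0 := ne_of_gt hq0
  have hq2 : q ^ 2 < 1 := by nlinarith
  have hq2' : (0:ℝ) ≤ q ^ 2 := sq_nonneg q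
  set S : ℝ → ℝ := fun c => ∑' n : ℕ, q ^ (2 * n) * f (q ^ (2 * n) * c) with hS
  have hsum : ∀ c : ℝ, Summable (fun n : ℕ => q ^ (2 * n) * f (q ^ (2 * n) * c)) :=
    qsym_summable q ⟨hq0, hq1⟩ f hf
  -- recursion : S c = f c + q^2 * S (q^2 * c)
  have hrec : ∀ c : ℝ, S c = f c + q ^ 2 * S (q ^ 2 * c) := by
    intro c
    have h0' := Summable.tsum_eq_zero_add (hsum c)
    have hcongr : (fun n : ℕ => q ^ (2 * (n + 1)) * f (q ^ (2 * (n + 1)) * c))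
        = fun n : ℕ => q ^ 2 * (q ^ (2 * n) * f (q ^ (2 * n) * (q ^ 2 * c))) := by
      funext n
      rw [show 2 * (n + 1) = 2 * n + 2 by ring]
      ring_nf
    rw [hS]
    simp only []
    rw [h0', hcongr, tsum_mul_left]
    norm_num
  -- F in terms of S
  have hF : ∀ x : ℝ, qsymF q f x = (1 - q ^ 2) * x * S (q * x) := by
    intro x
    unfold qsymF
    congr 1
    apply tsum_congr
    intro n
    congr 2
    rw [pow_succ]
    ring
  refine ⟨?_, ?_⟩
  · rintro x - hx
    rw [hF, hF]
    have e1 : q * (q * x) = q ^ 2 * x := by ring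
    have e2 : q * (q⁻¹ * x) = x := by field_simp
    rw [e1, e2, hrec x]
    have hd : q - q⁻¹ ≠ 0 := by
      intro h
      have : q * q = 1 := by field_simp at h; nlinarith [h]
      nlinarith
    have hne : q ^ 2 * x - x ≠ 0 := by
      intro h
      apply hx
      have hq21 : q ^ 2 - 1 ≠ 0 := by nlinarith
      have : (q ^ 2 - 1) * x = 0 := by linarith [h]
      rcases mul_eq_zero.mp this with h' | h'
      · exact absurd h' hq21
      · exact h'
    have hdx : (q - q⁻¹) * x ≠ 0 := mul_ne_zero hd hx
    rw [div_eq_iff hdx]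
    field_simp
    ring
  · -- derivative at 0
    rw [hasDerivAt_iff_tendsto_slope]
    have hslope : ∀ x : ℝ, x ≠ 0 → slope (qsymF q f) 0 x = (1 - q ^ 2) * S (q * x) := by
      intro x hx
      rw [slope_def_field, hF, hF]
      simp only [mul_zero, zero_mul, mul_comm]
      field_simp
      ring
    have hS0 : (1 - q ^ 2) * S 0 = f 0 := by
      have : S 0 = ∑' n : ℕ, (q ^ 2) ^ n * f 0 := by
        apply tsum_congr; intro n; rw [pow_mul]; norm_num
      rw [this, tsum_mul_right, tsum_geometric_of_lt_one hq2' hq2]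
      have h1q : (1:ℝ) - q ^ 2 ≠ 0 := by nlinarith
      field_simp
    have htend : Filter.Tendsto (fun x : ℝ => (1 - q ^ 2) * S (q * x)) (nhds 0) (nhds (f 0)) := by
      rw [Metric.tendsto_nhds_nhds]
      intro ε hε
      obtain ⟨δ, hδ, hδf⟩ := Metric.continuousAt_iff.mp hf (ε / 2) (by linarith)
      refine ⟨δ, hδ, ?_⟩
      intro x hxδ
      have hbound : ∀ n : ℕ, |q ^ (2 * n) * f (q ^ (2 * n) * (q * x)) - q ^ (2 * n) * f 0|
          ≤ (q ^ 2) ^ n * (ε / 2) := by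
        intro n
        have hqp : (0:ℝ) ≤ q ^ (2 * n) := pow_nonneg (le_of_lt hq0) _
        have habs : |q ^ (2 * n) * (q * x)| < δ := by
          rw [Real.dist_eq, sub_zero] at hxδ
          rw [abs_mul, abs_mul]
          calc |q ^ (2 * n)| * (|q| * |x|) ≤ 1 * (1 * |x|) := by
                apply mul_le_mul
                · rw [abs_of_nonneg hqp]; exact pow_le_one₀ (le_of_lt hq0) (le_of_lt hq1)
                · apply mul_le_mul
                  · rw [abs_of_pos hq0]; exact le_of_lt hq1
                  · exact le_refl _
                  · exact abs_nonneg _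
                  · norm_num
                · positivity
                · norm_num
            _ = |x| := by ring
            _ < δ := hxδ
        have := hδf (show dist (q ^ (2 * n) * (q * x)) 0 < δ by
          rwa [Real.dist_eq, sub_zero])
        rw [Real.dist_eq] at this
        calc |q ^ (2 * n) * f (q ^ (2 * n) * (q * x)) - q ^ (2 * n) * f 0|
            = q ^ (2 * n) * |f (q ^ (2 * n) * (q * x)) - f 0| := by
              rw [← mul_sub, abs_mul, abs_of_nonneg hqp]
          _ ≤ q ^ (2 * n) * (ε / 2) := mul_le_mul_of_nonneg_left (le_of_lt this) hqp
          _ = (q ^ 2) ^ n * (ε / 2) := by rw [pow_mul]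
      have hsum1 := hsum (q * x)
      have hsum2 : Summable (fun n : ℕ => q ^ (2 * n) * f 0) := by
        simpa using (hsum 0)
      have hsumsub := hsum1.sub hsum2
      have hgeo : Summable (fun n : ℕ => (q ^ 2) ^ n * (ε / 2)) :=
        (summable_geometric_of_lt_one hq2' hq2).mul_right _
      rw [Real.dist_eq]
      have key : (1 - q ^ 2) * S (q * x) - f 0
          = (1 - q ^ 2) * (S (q * x) - S 0) := by
        have : (1 - q ^ 2) * S 0 = f 0 := hS0
        ring_nf
        linarith [hS0]
      rw [key]
      have hSdiff : S (q * x) - S 0 = ∑' n : ℕ,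
          (q ^ (2 * n) * f (q ^ (2 * n) * (q * x)) - q ^ (2 * n) * f 0) := by
        rw [hS]
        simp only []
        rw [← Summable.tsum_sub hsum1 (hsum 0)]
        apply tsum_congr; intro n; simp
      rw [hSdiff]
      have habs := norm_tsum_le_tsum_norm (f := fun n : ℕ =>
        q ^ (2 * n) * f (q ^ (2 * n) * (q * x)) - q ^ (2 * n) * f 0) (by
          simpa [Real.norm_eq_abs] using hsumsub.abs)
      have hle : (∑' n : ℕ, ‖q ^ (2 * n) * f (q ^ (2 * n) * (q * x)) - q ^ (2 * n) * f 0‖)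
          ≤ ∑' n : ℕ, (q ^ 2) ^ n * (ε / 2) := by
        apply Summable.tsum_le_tsum _ (by simpa [Real.norm_eq_abs] using hsumsub.abs) hgeo
        intro n
        simpa [Real.norm_eq_abs] using hbound n
      have hgeoval : (∑' n : ℕ, (q ^ 2) ^ n * (ε / 2)) = (ε / 2) / (1 - q ^ 2) := by
        rw [tsum_mul_right, tsum_geometric_of_lt_one hq2' hq2]
        ring
      have h1q : (0:ℝ) < 1 - q ^ 2 := by linarith
      calc |(1 - q ^ 2) * ∑' n : ℕ,
            (q ^ (2 * n) * f (q ^ (2 * n) * (q * x)) - q ^ (2 * n) * f 0)|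
          = (1 - q ^ 2) * |∑' n : ℕ,
            (q ^ (2 * n) * f (q ^ (2 * n) * (q * x)) - q ^ (2 * n) * f 0)| := by
            rw [abs_mul, abs_of_pos h1q]
        _ ≤ (1 - q ^ 2) * ((ε / 2) / (1 - q ^ 2)) := by
            apply mul_le_mul_of_nonneg_left _ (le_of_lt h1q)
            calc |∑' n : ℕ, (q ^ (2 * n) * f (q ^ (2 * n) * (q * x)) - q ^ (2 * n) * f 0)|
                ≤ ∑' n : ℕ, ‖q ^ (2 * n) * f (q ^ (2 * n) * (q * x)) - q ^ (2 * n) * f 0‖ := by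
                  simpa [Real.norm_eq_abs] using habs
              _ ≤ (ε / 2) / (1 - q ^ 2) := hle.trans_eq hgeoval
        _ = ε / 2 := by
            have h1q' : (1:ℝ) - q ^ 2 ≠ 0 := ne_of_gt h1q
            field_simp
        _ < ε := by linarith
    have : Filter.Tendsto (slope (qsymF q f) 0) (nhdsWithin 0 {0}ᶜ) (nhds (f 0)) := by
      apply Filter.Tendsto.congr' _ (htend.mono_left nhdsWithin_le_nhds)
      filter_upwards [self_mem_nhdsWithin] with x hx
      exact (hslope x hx).symm
    exact this
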